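/- arXiv:2406.18975 — 3 statements merged into one kernel-verified Lean document; each statement's English description precedes it below -/
import Mathlib

section
/- Let f be a positive integer and let F : ℂ → ℂ be any function. Then the sum of F over the primitive f-th roots of unity satisfies Σ_{ζ ∈ 𝒫_f} F(ζ) = (1/f) · Σ_{ζ : ζ^f = 1} ζ · F(ζ) · Φ̂_f(ζ) · Φ'_f(ζ), where the second sum ranges over all f-th roots of unity in ℂ and Φ'_f denotes the derivative of the f-th cyclotomic polynomial. -/
open Polynomial

/-- For a positive integer `f` and any function `F : ℂ → ℂ`,
`∑_{ζ ∈ 𝒫_f} F ζ = (1/f) ∑_{ζ^f = 1} ζ F(ζ) Φ̂_f(ζ) Φ'_f(ζ)`. -/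
theorem sum_primitiveRoots_eq (f : ℕ) (hf : 0 < f) (F : ℂ → ℂ) :
    ∑ ζ ∈ primitiveRoots f ℂ, F ζ =
      (1 / (f : ℂ)) * ∑ ζ ∈ nthRootsFinset f (1 : ℂ),
        ζ * F ζ * ((X ^ f - 1 : ℂ[X]) /ₘ cyclotomic f ℂ).eval ζ *
          (derivative (cyclotomic f ℂ)).eval ζ := by
  have : NeZero f := ⟨hf.ne'⟩
  have hfC : (f : ℂ) ≠ 0 := Nat.cast_ne_zero.mpr hf.ne'
  obtain ⟨r, hr⟩ := cyclotomic.dvd_X_pow_sub_one (n := f) (R := ℂ)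
  have hdiv : (X ^ f - 1 : ℂ[X]) /ₘ cyclotomic f ℂ = r := by
    rw [hr, mul_divByMonic_cancel_left _ (cyclotomic.monic f ℂ)]
  have hsub : primitiveRoots f ℂ ⊆ nthRootsFinset f (1 : ℂ) := by
    intro ζ hζ
    rw [mem_primitiveRoots hf] at hζ
    exact (mem_nthRootsFinset hf (1 : ℂ)).mpr hζ.pow_eq_one
  rw [← Finset.sum_subset hsub (fun ζ hmem hnmem => ?_)]
  · rw [Finset.mul_sum]
    refine Finset.sum_congr rfl fun ζ hζ => ?_
    rw [mem_primitiveRoots hf] at hζ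
    have hroot : (cyclotomic f ℂ).eval ζ = 0 := by
      have := (isRoot_cyclotomic_iff (R := ℂ) (n := f)).mpr hζ
      exact this
    have hζf : ζ ^ f = 1 := hζ.pow_eq_one
    have hζ0 : ζ ≠ 0 := hζ.ne_zero hf.ne'
    -- derivative of X^f - 1 = derivative cyclotomic * r + cyclotomic * derivative r
    have hder : (f : ℂ) * ζ ^ (f - 1) =
        (derivative (cyclotomic f ℂ)).eval ζ * r.eval ζ := by
      have h1 : derivative (X ^ f - 1 : ℂ[X]) =
          derivative (cyclotomic f ℂ) * r + cyclotomic f ℂ * derivative r := by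
        rw [hr, derivative_mul]
      have h2 := congrArg (eval ζ) h1
      simp [hroot] at h2
      simpa [derivative_X_pow] using h2
    rw [hdiv]
    have : ζ * F ζ * r.eval ζ * (derivative (cyclotomic f ℂ)).eval ζ
        = F ζ * (ζ * ((derivative (cyclotomic f ℂ)).eval ζ * r.eval ζ)) := by ring
    rw [this, ← hder]
    have : ζ * ((f : ℂ) * ζ ^ (f - 1)) = (f : ℂ) * ζ ^ f := by
      rw [← mul_assoc, mul_comm ζ, mul_assoc, ← pow_succ']
      congr 2
      omega
    rw [this, hζf, mul_one]; field_simp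
  · -- nonprimitive roots give zero
    rw [mem_nthRootsFinset hf (1 : ℂ)] at hmem
    have hnp : ¬ IsPrimitiveRoot ζ f := by
      rwa [mem_primitiveRoots hf] at hnmem
    have hcy : (cyclotomic f ℂ).eval ζ ≠ 0 := fun h =>
      hnp ((isRoot_cyclotomic_iff (R := ℂ) (n := f)).mp h)
    have : (cyclotomic f ℂ).eval ζ * r.eval ζ = 0 := by
      have := congrArg (eval ζ) hr
      simpa [hmem] using this.symm
    have hr0 : r.eval ζ = 0 := by
      rcases mul_eq_zero.mp this with h | h
      · exact absurd h hcy
      · exact h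
    rw [hdiv, hr0]
    ring
end

section
/- Let f be a positive integer, let M be a polynomial with complex coefficients, and let c_0, c_1, …, c_{f−1} ∈ ℂ be the unique coefficients such that M(x)·Φ̂_f(x)·Φ'_f(x) ≡ Σ_{i=0}^{f−1} c_i x^i (mod x^f − 1). Let t be an integer and let t̂ be the unique integer with 1 ≤ t̂ ≤ f and t̂ ≡ t (mod f). Then Σ_{ζ ∈ 𝒫_f} ζ^{−t} · M(ζ) = c_{t̂−1}. -/
open Polynomial

private lemma sum_nthRoots_zpow (f : ℕ) (hf : 0 < f) (k : ℤ) :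
    ∑ ζ ∈ nthRootsFinset f (1 : ℂ), ζ ^ k = if (f : ℤ) ∣ k then (f : ℂ) else 0 := by
  have : NeZero f := ⟨hf.ne'⟩
  obtain ⟨ζ₀, hζ₀⟩ : ∃ ζ₀ : ℂ, IsPrimitiveRoot ζ₀ f :=
    ⟨_, Complex.isPrimitiveRoot_exp f hf.ne'⟩
  have hne : ζ₀ ≠ 0 := hζ₀.ne_zero hf.ne'
  have hsum : ∑ ζ ∈ nthRootsFinset f (1 : ℂ), ζ ^ k = ∑ i ∈ Finset.range f, (ζ₀ ^ i) ^ k := by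
    refine (Finset.sum_bij (fun i _ => ζ₀ ^ i) ?_ ?_ ?_ ?_).symm
    · intro i hi
      rw [mem_nthRootsFinset hf (1 : ℂ), ← pow_mul, mul_comm, pow_mul, hζ₀.pow_eq_one, one_pow]
    · intro i hi j hj h
      exact hζ₀.pow_inj (Finset.mem_range.mp hi) (Finset.mem_range.mp hj) h
    · intro ζ hζ
      obtain ⟨i, hi, rfl⟩ := hζ₀.eq_pow_of_pow_eq_one ((mem_nthRootsFinset hf (1 : ℂ)).mp hζ)
      exact ⟨i, Finset.mem_range.mpr hi, rfl⟩
    · intro i _; rfl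
  rw [hsum]
  have hrw : ∀ i : ℕ, (ζ₀ ^ i) ^ k = (ζ₀ ^ k) ^ i := by
    intro i
    rw [← zpow_natCast ζ₀ i, ← zpow_mul, mul_comm, zpow_mul, zpow_natCast]
  simp only [hrw]
  by_cases hdvd : (f : ℤ) ∣ k
  · rw [if_pos hdvd]
    have h1 : ζ₀ ^ k = 1 := (hζ₀.zpow_eq_one_iff_dvd k).mpr hdvd
    simp [h1]
  · rw [if_neg hdvd]
    have h1 : ζ₀ ^ k ≠ 1 := fun h => hdvd ((hζ₀.zpow_eq_one_iff_dvd k).mp h)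
    rw [geom_sum_eq h1]
    have : (ζ₀ ^ k) ^ f = 1 := by
      rw [← zpow_natCast, ← zpow_mul, mul_comm, zpow_mul, zpow_natCast, hζ₀.pow_eq_one, one_zpow]
    rw [this, sub_self, zero_div]

/-- If `M(x)·Φ̂_f(x)·Φ'_f(x) ≡ ∑_{i=0}^{f-1} c_i x^i (mod x^f - 1)` and
`t̂ ∈ {1, …, f}` with `t̂ ≡ t (mod f)`, then `∑_{ζ ∈ 𝒫_f} ζ^{-t} M(ζ) = c_{t̂-1}`. -/
theorem sum_primitiveRoots_zpow_mul_eval (f : ℕ) (hf : 0 < f) (M : ℂ[X]) (c : ℕ → ℂ)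
    (hc : (X ^ f - 1 : ℂ[X]) ∣
      M * ((X ^ f - 1 : ℂ[X]) /ₘ cyclotomic f ℂ) * derivative (cyclotomic f ℂ) -
        ∑ i ∈ Finset.range f, C (c i) * X ^ i)
    (t : ℤ) (that : ℕ) (h1 : 1 ≤ that) (h2 : that ≤ f)
    (h3 : Int.ModEq (f : ℤ) (that : ℤ) t) :
    ∑ ζ ∈ primitiveRoots f ℂ, ζ ^ (-t) * M.eval ζ = c (that - 1) := by
  have : NeZero f := ⟨hf.ne'⟩
  have hfC : (f : ℂ) ≠ 0 := Nat.cast_ne_zero.mpr hf.ne'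
  set Φ := cyclotomic f ℂ with hΦ
  set Φh := (X ^ f - 1 : ℂ[X]) /ₘ Φ with hΦh
  set Q : ℂ[X] := ∑ i ∈ Finset.range f, C (c i) * X ^ i with hQ
  set P : ℂ[X] := M * Φh * derivative Φ with hP
  have hmonic : Φ.Monic := cyclotomic.monic f ℂ
  have hmul : Φ * Φh = X ^ f - 1 := by
    have hdvd : Φ ∣ X ^ f - 1 := cyclotomic.dvd_X_pow_sub_one f ℂ
    have := modByMonic_add_div (X ^ f - 1 : ℂ[X]) Φ
    rwa [(modByMonic_eq_zero_iff_dvd hmonic).mpr hdvd, zero_add] at this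
  -- primitive root facts
  have hprimmem : ∀ ζ ∈ primitiveRoots f ℂ, IsPrimitiveRoot ζ f := fun ζ hζ =>
    (mem_primitiveRoots hf).mp hζ
  -- key evaluation on primitive roots: Φh(ζ) * Φ'(ζ) = f * ζ^(f-1)
  have hkey : ∀ ζ ∈ primitiveRoots f ℂ,
      eval ζ Φh * eval ζ (derivative Φ) = f * ζ ^ (f - 1) := by
    intro ζ hζ
    have hroot : eval ζ Φ = 0 := (hprimmem ζ hζ).isRoot_cyclotomic hf
    have hd : derivative (Φ * Φh) = derivative (X ^ f - 1 : ℂ[X]) := by rw [hmul]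
    rw [derivative_mul, derivative_sub, derivative_one, derivative_X_pow, sub_zero] at hd
    have := congrArg (eval ζ) hd
    simp only [eval_add, eval_mul, hroot, zero_mul, mul_zero, add_zero, zero_add,
      eval_natCast, eval_pow, eval_X, eval_C] at this
    rw [mul_comm]
    exact this
  -- Q and P agree on all f-th roots of unity
  have hQP : ∀ ζ ∈ nthRootsFinset f (1 : ℂ), eval ζ Q = eval ζ P := by
    intro ζ hζ
    obtain ⟨k, hk⟩ := hc
    have hz : eval ζ (X ^ f - 1 : ℂ[X]) = 0 := by
      simp [eval_pow, (mem_nthRootsFinset hf (1 : ℂ)).mp hζ]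
    have := congrArg (eval ζ) hk
    simp only [eval_sub, eval_mul, hz, zero_mul] at this
    exact (sub_eq_zero.mp this).symm
  have hsub : primitiveRoots f ℂ ⊆ nthRootsFinset f (1 : ℂ) := fun ζ hζ =>
    ((mem_primitiveRoots hf).mp hζ).mem_nthRootsFinset hf
  -- step 1
  have step1 : ∑ ζ ∈ primitiveRoots f ℂ, ζ ^ (1 - t) * eval ζ Q
      = (f : ℂ) * ∑ ζ ∈ primitiveRoots f ℂ, ζ ^ (-t) * M.eval ζ := by
    rw [Finset.mul_sum]
    refine Finset.sum_congr rfl fun ζ hζ => ?_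
    have hζne : ζ ≠ 0 := ne_zero_of_mem_nthRootsFinset one_ne_zero (hsub hζ)
    have hpow : ζ ^ f = 1 := (hprimmem ζ hζ).pow_eq_one
    have hz2 : ζ ^ (1 - t) * ζ ^ (f - 1 : ℕ) = ζ ^ (-t) := by
      rw [← zpow_natCast ζ (f - 1), ← zpow_add₀ hζne]
      have he : 1 - t + ((f - 1 : ℕ) : ℤ) = (f : ℤ) + (-t) := by
        rw [Nat.cast_sub hf]; ring
      rw [he, zpow_add₀ hζne, zpow_natCast, hpow, one_mul]
    rw [hQP ζ (hsub hζ), hP]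
    simp only [eval_mul]
    rw [mul_assoc (eval ζ M), hkey ζ hζ]
    linear_combination (f : ℂ) * eval ζ M * hz2
  -- step 2
  have step2 : ∑ ζ ∈ nthRootsFinset f (1 : ℂ), ζ ^ (1 - t) * eval ζ Q
      = ∑ ζ ∈ primitiveRoots f ℂ, ζ ^ (1 - t) * eval ζ Q := by
    symm
    apply Finset.sum_subset hsub
    intro ζ hζn hζp
    have hΦne : eval ζ Φ ≠ 0 := fun h =>
      hζp ((mem_primitiveRoots hf).mpr (isRoot_cyclotomic_iff.mp h))
    have hmul0 : eval ζ Φ * eval ζ Φh = 0 := by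
      have := congrArg (eval ζ) hmul
      simp only [eval_mul, eval_sub, eval_pow, eval_X, eval_one] at this
      rw [this, (mem_nthRootsFinset hf (1 : ℂ)).mp hζn, sub_self]
    have hΦh0 : eval ζ Φh = 0 := by
      rcases mul_eq_zero.mp hmul0 with h | h
      · exact absurd h hΦne
      · exact h
    rw [hQP ζ hζn, hP]
    simp [eval_mul, hΦh0]
  -- step 3
  have step3 : ∑ ζ ∈ nthRootsFinset f (1 : ℂ), ζ ^ (1 - t) * eval ζ Q
      = c (that - 1) * f := by
    have hterm : ∀ ζ ∈ nthRootsFinset f (1 : ℂ), ζ ^ (1 - t) * eval ζ Q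
        = ∑ i ∈ Finset.range f, c i * ζ ^ (1 - t + i) := by
      intro ζ hζ
      have hζne : ζ ≠ 0 := ne_zero_of_mem_nthRootsFinset one_ne_zero hζ
      rw [hQ]
      simp only [eval_finset_sum, eval_mul, eval_C, eval_pow, eval_X, Finset.mul_sum]
      refine Finset.sum_congr rfl fun i _ => ?_
      rw [zpow_add₀ hζne, zpow_natCast]; ring
    rw [Finset.sum_congr rfl hterm, Finset.sum_comm]
    have hinner : ∀ i ∈ Finset.range f, ∑ ζ ∈ nthRootsFinset f (1 : ℂ), c i * ζ ^ (1 - t + i)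
        = c i * (if (f : ℤ) ∣ (1 - t + i) then (f : ℂ) else 0) := by
      intro i _
      rw [← Finset.mul_sum, sum_nthRoots_zpow f hf]
    rw [Finset.sum_congr rfl hinner]
    have hd : (f : ℤ) ∣ (t - that) := h3.dvd
    rw [Finset.sum_eq_single (that - 1)]
    · have hdvd : (f : ℤ) ∣ 1 - t + ((that - 1 : ℕ) : ℤ) := by
        have hcast : ((that - 1 : ℕ) : ℤ) = (that : ℤ) - 1 := by
          rw [Nat.cast_sub h1]; rfl
        rw [hcast, show 1 - t + ((that : ℤ) - 1) = -(t - that) by ring]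
        exact hd.neg_right
      rw [if_pos hdvd]
    · intro i hi hne
      have hndvd : ¬ (f : ℤ) ∣ 1 - t + i := by
        intro hdvd
        have h5 : (f : ℤ) ∣ (1 - t + i) + (t - that) := dvd_add hdvd hd
        rw [show (1 - t + (i : ℤ)) + (t - that) = 1 + i - that by ring] at h5
        have hir := Finset.mem_range.mp hi
        have h7 : (1 + (i : ℤ) - that) = 0 := Int.eq_zero_of_abs_lt_dvd h5 (by
          rw [abs_lt]; omega)
        omega
      rw [if_neg hndvd, mul_zero]
    · intro h
      exact absurd (Finset.mem_range.mpr (by omega)) h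
  have hfin : (f : ℂ) * (∑ ζ ∈ primitiveRoots f ℂ, ζ ^ (-t) * M.eval ζ)
      = (f : ℂ) * c (that - 1) := by
    rw [← step1, ← step2, step3]; ring
  exact mul_left_cancel₀ hfC hfin
end

section
/- Let a_1, …, a_N be positive integers and let t ∈ ℚ. In the field of formal Laurent series ℚ((s)), each factor 1 − exp(a_i s) is nonzero, and the coefficient of s^{−1} of the Laurent series exp(−t s) · (Π_{i=1}^{N} (1 − exp(a_i s)))^{−1} equals ((−1)^N / Π_{i=1}^{N} a_i) · Σ_{m=0}^{N−1} ((−t)^m / m!) · A_{N−1−m}, where A_k denotes the coefficient of s^k in the formal power series Π_{i=1}^{N} G(a_i s) and G(x) = Σ_{n ≥ 0} (B_n/n!) x^n is the exponential generating series of the Bernoulli numbers. Consequently, the negative of this s^{−1} coefficient, which is the first Sylvester wave W_1(t; a), equals Σ_{m=0}^{N−1} ((−1)^{N+m+1}/(m! · Π_{i=1}^{N} a_i)) · A_{N−1−m} · t^m, a polynomial in t of degree N − 1. -/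
open PowerSeries

/-- For positive integers `a_1, …, a_N` and `t ∈ ℚ`, in `ℚ((s))` each factor
`1 - exp(a_i s)` is nonzero, and
`res_{s=0} exp(-ts)/∏(1 - exp(a_i s)) = ((-1)^N/∏ a_i) ∑_{m<N} ((-t)^m/m!) A_{N-1-m}`,
where `A_k = [s^k] ∏ G(a_i s)` and `G(x) = ∑ B_n x^n/n!`.  Consequently the first Sylvester
wave `W_1(t; a)`, the negative of this residue, equals
`∑_{m<N} ((-1)^{N+m+1}/(m! ∏ a_i)) A_{N-1-m} t^m`. -/
theorem firstWave_residue (N : ℕ) (a : Fin N → ℕ) (ha : ∀ i, 0 < a i) (t : ℚ) (A : ℕ → ℚ)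
    (hA : ∀ k, A k = PowerSeries.coeff (R := ℚ) k
      (∏ i, PowerSeries.rescale (a i : ℚ)
        (PowerSeries.mk fun n => bernoulli n / n.factorial))) :
    (∀ i : Fin N, (1 : LaurentSeries ℚ) -
        HahnSeries.ofPowerSeries ℤ ℚ (PowerSeries.rescale (a i : ℚ) (PowerSeries.exp ℚ)) ≠ 0) ∧
    ((HahnSeries.ofPowerSeries ℤ ℚ (PowerSeries.rescale (-t) (PowerSeries.exp ℚ)) *
        (∏ i, ((1 : LaurentSeries ℚ) -
          HahnSeries.ofPowerSeries ℤ ℚ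
            (PowerSeries.rescale (a i : ℚ) (PowerSeries.exp ℚ))))⁻¹).coeff (-1) =
      ((-1 : ℚ) ^ N / ∏ i, (a i : ℚ)) *
        ∑ m ∈ Finset.range N, ((-t) ^ m / m.factorial) * A (N - 1 - m)) ∧
    (-((HahnSeries.ofPowerSeries ℤ ℚ (PowerSeries.rescale (-t) (PowerSeries.exp ℚ)) *
        (∏ i, ((1 : LaurentSeries ℚ) -
          HahnSeries.ofPowerSeries ℤ ℚ
            (PowerSeries.rescale (a i : ℚ) (PowerSeries.exp ℚ))))⁻¹).coeff (-1)) =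
      ∑ m ∈ Finset.range N,
        ((-1 : ℚ) ^ (N + m + 1) / (m.factorial * ∏ i, (a i : ℚ))) * A (N - 1 - m) * t ^ m) := by
  have hBP : (PowerSeries.mk fun n => (bernoulli n / n.factorial : ℚ)) = bernoulliPowerSeries ℚ := by
    ext n; simp [bernoulliPowerSeries, Algebra.algebraMap_self]
  set G : Fin N → ℚ⟦X⟧ :=
    fun i => PowerSeries.rescale (a i : ℚ) (PowerSeries.mk fun n => bernoulli n / n.factorial)
    with hGdef
  set E : Fin N → ℚ⟦X⟧ := fun i => PowerSeries.rescale (a i : ℚ) (PowerSeries.exp ℚ) with hEdef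
  set φ := HahnSeries.ofPowerSeries ℤ ℚ with hφdef
  -- per-factor identity
  have key : ∀ i : Fin N, (1 - E i) * G i = PowerSeries.C (-(a i : ℚ)) * PowerSeries.X := by
    intro i
    have h := congrArg (PowerSeries.rescale (a i : ℚ)) (bernoulliPowerSeries_mul_exp_sub_one ℚ)
    rw [map_mul, map_sub, map_one, rescale_X] at h
    rw [hGdef, hEdef, hBP, map_neg, neg_mul]
    calc (1 - PowerSeries.rescale (a i : ℚ) (PowerSeries.exp ℚ)) *
        PowerSeries.rescale (a i : ℚ) (bernoulliPowerSeries ℚ)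
        = -(PowerSeries.rescale (a i : ℚ) (bernoulliPowerSeries ℚ) *
            (PowerSeries.rescale (a i : ℚ) (PowerSeries.exp ℚ) - 1)) := by ring
      _ = -(PowerSeries.C (a i : ℚ) * PowerSeries.X) := by rw [h]
  -- nonzero factors, power series level
  have hne : ∀ i : Fin N, (1 - E i) ≠ 0 := by
    intro i h
    have h1 : PowerSeries.coeff 1 (1 - E i) = -(a i : ℚ) := by
      simp [hEdef, coeff_rescale, PowerSeries.coeff_exp, PowerSeries.coeff_one,
        Algebra.algebraMap_self]
    rw [h, map_zero] at h1
    have h2 : (a i : ℚ) = 0 := by linarith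
    exact (ha i).ne' (by exact_mod_cast h2)
  have hfac : ∀ i : Fin N, (1 : LaurentSeries ℚ) - φ (E i) = φ (1 - E i) := fun i => by
    rw [map_sub, map_one]
  have conj1 : ∀ i : Fin N, (1 : LaurentSeries ℚ) - φ (E i) ≠ 0 := by
    intro i h
    rw [hfac i] at h
    have h0 : φ (1 - E i) = φ 0 := by rw [map_zero]; exact h
    exact hne i (HahnSeries.ofPowerSeries_injective h0)
  refine ⟨conj1, ?_⟩
  -- the scalar
  set u : ℚ := ∏ i, (-(a i : ℚ)) with hudef
  have hu : u = (-1 : ℚ) ^ N * ∏ i, (a i : ℚ) := by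
    have hn : ∀ i : Fin N, (-(a i : ℚ)) = (-1) * (a i : ℚ) := fun i => by ring
    rw [hudef, Finset.prod_congr rfl fun i _ => hn i, Finset.prod_mul_distrib,
      Finset.prod_const, Finset.card_univ, Fintype.card_fin]
  have hane : (∏ i, (a i : ℚ)) ≠ 0 :=
    Finset.prod_ne_zero_iff.mpr fun i _ => Nat.cast_ne_zero.mpr (ha i).ne'
  have hune : u ≠ 0 := by
    rw [hu]; exact mul_ne_zero (pow_ne_zero _ (by norm_num)) hane
  -- product identity, power series level
  have hprod : (∏ i, (1 - E i)) * (∏ i, G i)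
      = PowerSeries.C u * PowerSeries.X ^ N := by
    rw [← Finset.prod_mul_distrib, Finset.prod_congr rfl fun i _ => key i,
      Finset.prod_mul_distrib, ← map_prod, Finset.prod_const, Finset.card_univ,
      Fintype.card_fin]
  -- Laurent level
  have hD : (∏ i, ((1 : LaurentSeries ℚ) - φ (E i))) = φ (∏ i, (1 - E i)) := by
    rw [Finset.prod_congr rfl fun i _ => hfac i, map_prod]
  have hDne : (∏ i, ((1 : LaurentSeries ℚ) - φ (E i))) ≠ 0 :=
    Finset.prod_ne_zero_iff.mpr fun i _ => conj1 i
  have hprodL : (∏ i, ((1 : LaurentSeries ℚ) - φ (E i))) * φ (∏ i, G i)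
      = HahnSeries.single (N : ℤ) u := by
    rw [hD, ← map_mul, hprod, map_mul, map_pow, hφdef, HahnSeries.ofPowerSeries_C,
      HahnSeries.ofPowerSeries_X, HahnSeries.single_pow, HahnSeries.C_apply,
      HahnSeries.single_mul_single]
    simp
  have hinv : (∏ i, ((1 : LaurentSeries ℚ) - φ (E i)))⁻¹
      = φ (∏ i, G i) * HahnSeries.single (-(N : ℤ)) u⁻¹ := by
    refine inv_eq_of_mul_eq_one_right ?_
    rw [← mul_assoc, hprodL, HahnSeries.single_mul_single, add_neg_cancel,
      mul_inv_cancel₀ hune, HahnSeries.single_zero_one]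
  set e : ℚ⟦X⟧ := PowerSeries.rescale (-t) (PowerSeries.exp ℚ) with hedef
  have hcoe : ∀ (x : ℚ⟦X⟧) (n : ℕ), (φ x).coeff (n : ℤ) = PowerSeries.coeff n x :=
    fun x n => LaurentSeries.coeff_coe_powerSeries x n
  rcases Nat.eq_zero_or_pos N with hN | hN
  · subst hN
    have h0 : (φ e).coeff (-1) = 0 := by
      have := PowerSeries.coeff_coe e (-1)
      rw [if_pos (by norm_num)] at this
      exact this
    simp only [Finset.univ_eq_empty, Finset.prod_empty, inv_one, mul_one, Finset.range_zero,
      Finset.sum_empty, mul_zero, h0, neg_zero]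
    exact ⟨trivial, trivial⟩
  have hres : (φ e * (∏ i, ((1 : LaurentSeries ℚ) - φ (E i)))⁻¹).coeff (-1)
      = u⁻¹ * PowerSeries.coeff (N - 1) (e * ∏ i, G i) := by
    rw [hinv]
    have hmul : φ e * (φ (∏ i, G i) * HahnSeries.single (-(N : ℤ)) u⁻¹)
        = HahnSeries.single (-(N : ℤ)) u⁻¹ * φ (e * ∏ i, G i) := by
      rw [map_mul]; ring
    rw [hmul]
    have hc : (-1 : ℤ) = ((N - 1 : ℕ) : ℤ) + (-(N : ℤ)) := by omega
    rw [hc, HahnSeries.coeff_single_mul_add, hcoe]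
  have hNsub : N - 1 + 1 = N := Nat.succ_pred_eq_of_pos hN
  have hcoeff : PowerSeries.coeff (N - 1) (e * ∏ i, G i)
      = ∑ m ∈ Finset.range N, ((-t) ^ m / m.factorial) * A (N - 1 - m) := by
    rw [PowerSeries.coeff_mul, Finset.Nat.sum_antidiagonal_eq_sum_range_succ_mk,
      Nat.succ_eq_add_one, hNsub]
    refine Finset.sum_congr rfl fun m hm => ?_
    dsimp only
    rw [hedef, hA]
    rw [coeff_rescale, PowerSeries.coeff_exp]
    simp [Algebra.algebraMap_self, div_eq_mul_inv]
  have huinv : u⁻¹ = (-1 : ℚ) ^ N / ∏ i, (a i : ℚ) := by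
    rw [hu, mul_inv, div_eq_mul_inv, ← inv_pow, inv_neg, inv_one]
  have conj2 : (φ e * (∏ i, ((1 : LaurentSeries ℚ) - φ (E i)))⁻¹).coeff (-1)
      = ((-1 : ℚ) ^ N / ∏ i, (a i : ℚ)) *
        ∑ m ∈ Finset.range N, ((-t) ^ m / m.factorial) * A (N - 1 - m) := by
    rw [hres, hcoeff, huinv]
  refine ⟨conj2, ?_⟩
  rw [conj2, Finset.mul_sum, ← Finset.sum_neg_distrib]
  refine Finset.sum_congr rfl fun m hm => ?_
  have hm1 : (m.factorial : ℚ) ≠ 0 := Nat.cast_ne_zero.mpr m.factorial_ne_zero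
  field_simp
  ring
end
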